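/- Let I = (G_1,...,G_n) ⊂ ℝ[X_1,...,X_n] with G_i = X_i^{a_i+1} + F_i, where 2 ≤ a_0 ≤ a_1 ≤ ⋯ ≤ a_n and deg F_i ≤ a_i − a_0. In the quotient A = ℝ[X_1,...,X_n]/I, with vector-space basis given by the residue classes of monomials X_1^{α_1}⋯X_n^{α_n}, 0 ≤ α_i ≤ a_i, the trace of the multiplication map by X_1^2 is zero. -/

import Mathlib

open MvPolynomial

namespace Stmt16

variable {n : ℕ} (a : Fin (n + 1) → ℕ) (F : Fin n → MvPolynomial (Fin n) ℝ)

/-- degree of an exponent vector -/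
def dg (d : Fin n →₀ ℕ) : ℕ := d.sum fun _ m => m

lemma dg_add (x y : Fin n →₀ ℕ) : dg (x + y) = dg x + dg y :=
  Finsupp.sum_add_index' (fun _ => rfl) (fun _ _ _ => rfl)

lemma dg_single (i : Fin n) (k : ℕ) : dg (Finsupp.single i k) = k :=
  Finsupp.sum_single_index rfl

lemma apply_le_dg (d : Fin n →₀ ℕ) (i : Fin n) : d i ≤ dg d := by
  by_cases h : d i = 0
  · simp [h]
  · exact Finset.single_le_sum (f := fun j => d j) (fun _ _ => Nat.zero_le _)
      (Finsupp.mem_support_iff.mpr h)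

lemma sub_single_add {d : Fin n →₀ ℕ} {i : Fin n} {k : ℕ} (h : k ≤ d i) :
    d - Finsupp.single i k + Finsupp.single i k = d :=
  tsub_add_cancel_of_le (Finsupp.single_le_iff.mpr h)

lemma dg_sub_single {d : Fin n →₀ ℕ} {i : Fin n} {k : ℕ} (h : k ≤ d i) :
    dg (d - Finsupp.single i k) + k = dg d := by
  conv_rhs => rw [← sub_single_add h]
  rw [dg_add, dg_single]

variable (h1 : 1 ≤ a 0) (hm : ∀ i : Fin n, a 0 ≤ a i.succ)
  (hdeg : ∀ i, (F i).totalDegree ≤ a i.succ - a 0)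

include h1 hm hdeg in
/-- the key decreasing lemma -/
lemma keyLt {d : Fin n →₀ ℕ} {i : Fin n} (hd : a i.succ + 1 ≤ d i)
    {e : Fin n →₀ ℕ}
    (he : e ∈ ((monomial (d - Finsupp.single i (a i.succ + 1)) (1:ℝ)) * F i).support) :
    dg e < dg d := by
  have h2 : dg e ≤ ((monomial (d - Finsupp.single i (a i.succ + 1)) (1:ℝ)) * F i).totalDegree :=
    le_totalDegree he
  have h3 := totalDegree_mul (monomial (d - Finsupp.single i (a i.succ + 1)) (1:ℝ)) (F i)
  rw [totalDegree_monomial _ (one_ne_zero)] at h3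
  have h4 := dg_sub_single hd
  have h5 := hdeg i
  have h6 := hm i
  have h7 := h1
  have h8 : d i ≤ dg d := apply_le_dg d i
  unfold dg at *
  omega

end Stmt16

namespace Stmt16
variable {n : ℕ} (a : Fin (n + 1) → ℕ) (F : Fin n → MvPolynomial (Fin n) ℝ)
variable (h1 : 1 ≤ a 0) (hm : ∀ i : Fin n, a 0 ≤ a i.succ)
  (hdeg : ∀ i, (F i).totalDegree ≤ a i.succ - a 0)

noncomputable def normalize (h1 : 1 ≤ a 0) (hm : ∀ i : Fin n, a 0 ≤ a i.succ)
    (hdeg : ∀ i, (F i).totalDegree ≤ a i.succ - a 0) (d : Fin n →₀ ℕ) : MvPolynomial (Fin n) ℝ :=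
  if h : ∃ i, a i.succ + 1 ≤ d i then
    - ∑ e ∈ ((monomial (d - Finsupp.single h.choose (a h.choose.succ + 1)) (1:ℝ))
          * F h.choose).support.attach,
        coeff e.1 ((monomial (d - Finsupp.single h.choose (a h.choose.succ + 1)) (1:ℝ))
          * F h.choose) • normalize h1 hm hdeg e.1
  else monomial d 1
termination_by dg d
decreasing_by exact keyLt a F h1 hm hdeg h.choose_spec e.2

end Stmt16

namespace Stmt16
variable {n : ℕ} (a : Fin (n + 1) → ℕ) (F : Fin n → MvPolynomial (Fin n) ℝ)
variable (h1 : 1 ≤ a 0) (hm : ∀ i : Fin n, a 0 ≤ a i.succ)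
  (hdeg : ∀ i, (F i).totalDegree ≤ a i.succ - a 0)

/-- linear extension of `normalize` -/
noncomputable def Nf (P : MvPolynomial (Fin n) ℝ) : MvPolynomial (Fin n) ℝ :=
  ∑ d ∈ P.support, coeff d P • normalize a F h1 hm hdeg d

lemma normalize_red {d : Fin n →₀ ℕ} (hred : ∀ i, d i ≤ a i.succ) :
    normalize a F h1 hm hdeg d = monomial d 1 := by
  rw [normalize, dif_neg]
  push_neg
  exact fun i => Nat.lt_succ_of_le (hred i)

lemma normalize_nonred {d : Fin n →₀ ℕ} (h : ∃ i, a i.succ + 1 ≤ d i) :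
    normalize a F h1 hm hdeg d =
      - Nf a F h1 hm hdeg ((monomial (d - Finsupp.single h.choose (a h.choose.succ + 1)) (1:ℝ))
          * F h.choose) := by
  rw [normalize, dif_pos h, Nf]
  rw [← Finset.sum_attach (((monomial (d - Finsupp.single h.choose (a h.choose.succ + 1)) (1:ℝ))
          * F h.choose).support) (fun e => coeff e ((monomial (d - Finsupp.single h.choose (a h.choose.succ + 1)) (1:ℝ))
          * F h.choose) • normalize a F h1 hm hdeg e)]

lemma Nf_monomial (d : Fin n →₀ ℕ) (r : ℝ) :
    Nf a F h1 hm hdeg (monomial d r) = r • normalize a F h1 hm hdeg d := by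
  rcases eq_or_ne r 0 with rfl | hr
  · simp [Nf]
  · rw [Nf, support_monomial, if_neg hr, Finset.sum_singleton, coeff_monomial, if_pos rfl]

lemma Nf_sum_support (P : MvPolynomial (Fin n) ℝ) {s : Finset (Fin n →₀ ℕ)}
    (hs : P.support ⊆ s) :
    Nf a F h1 hm hdeg P = ∑ d ∈ s, coeff d P • normalize a F h1 hm hdeg d := by
  rw [Nf]
  refine Finset.sum_subset hs fun d _ hd => ?_
  rw [notMem_support_iff.mp hd, zero_smul]

lemma Nf_add (P Q : MvPolynomial (Fin n) ℝ) :
    Nf a F h1 hm hdeg (P + Q) = Nf a F h1 hm hdeg P + Nf a F h1 hm hdeg Q := by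
  rw [Nf_sum_support a F h1 hm hdeg (P+Q) (s := P.support ∪ Q.support) (support_add),
    Nf_sum_support a F h1 hm hdeg P (s := P.support ∪ Q.support) (Finset.subset_union_left),
    Nf_sum_support a F h1 hm hdeg Q (s := P.support ∪ Q.support) (Finset.subset_union_right),
    ← Finset.sum_add_distrib]
  refine Finset.sum_congr rfl fun d _ => ?_
  rw [coeff_add, add_smul]

lemma Nf_zero : Nf a F h1 hm hdeg 0 = 0 := by simp [Nf]

lemma Nf_smul (r : ℝ) (P : MvPolynomial (Fin n) ℝ) :
    Nf a F h1 hm hdeg (r • P) = r • Nf a F h1 hm hdeg P := by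
  rw [Nf_sum_support a F h1 hm hdeg (r • P) (s := P.support) (Finsupp.support_smul), Nf,
    Finset.smul_sum]
  refine Finset.sum_congr rfl fun d _ => ?_
  rw [coeff_smul, smul_assoc]

lemma Nf_neg (P : MvPolynomial (Fin n) ℝ) :
    Nf a F h1 hm hdeg (-P) = - Nf a F h1 hm hdeg P := by
  have := Nf_smul a F h1 hm hdeg (-1) P
  simpa using this

lemma Nf_finsum {α : Type*} (s : Finset α) (f : α → MvPolynomial (Fin n) ℝ) :
    Nf a F h1 hm hdeg (∑ i ∈ s, f i) = ∑ i ∈ s, Nf a F h1 hm hdeg (f i) := by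
  classical
  induction s using Finset.induction_on with
  | empty => simp [Nf_zero]
  | insert _ _ h ih => rw [Finset.sum_insert h, Finset.sum_insert h, Nf_add, ih]

lemma mul_expand (P Q : MvPolynomial (Fin n) ℝ) :
    P * Q = ∑ μ ∈ P.support, coeff μ P • ((monomial μ 1) * Q) := by
  conv_lhs => rw [as_sum P, Finset.sum_mul]
  refine Finset.sum_congr rfl fun μ _ => ?_
  rw [← smul_mul_assoc, smul_monomial, smul_eq_mul, mul_one]


lemma Nf_mul_expand (ν : Fin n →₀ ℕ) (P : MvPolynomial (Fin n) ℝ) :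
    Nf a F h1 hm hdeg ((monomial ν 1) * P)
      = ∑ μ ∈ P.support, coeff μ P • normalize a F h1 hm hdeg (ν + μ) := by
  conv_lhs => rw [mul_comm, mul_expand P (monomial ν 1)]
  rw [Nf_finsum]
  refine Finset.sum_congr rfl fun μ _ => ?_
  rw [Nf_smul, mul_comm, monomial_mul, mul_one, Nf_monomial, one_smul]

lemma Nf_mul_left_expand (P Q : MvPolynomial (Fin n) ℝ) :
    Nf a F h1 hm hdeg (P * Q)
      = ∑ μ ∈ P.support, coeff μ P • Nf a F h1 hm hdeg ((monomial μ 1) * Q) := by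
  conv_lhs => rw [mul_expand P Q]
  rw [Nf_finsum]
  exact Finset.sum_congr rfl fun μ _ => Nf_smul a F h1 hm hdeg _ _

end Stmt16

namespace Stmt16
variable {n : ℕ} (a : Fin (n + 1) → ℕ) (F : Fin n → MvPolynomial (Fin n) ℝ)
variable (h1 : 1 ≤ a 0) (hm : ∀ i : Fin n, a 0 ≤ a i.succ)
  (hdeg : ∀ i, (F i).totalDegree ≤ a i.succ - a 0)

lemma normalize_deg_le : ∀ K, ∀ d : Fin n →₀ ℕ, dg d ≤ K →
    (normalize a F h1 hm hdeg d).totalDegree ≤ dg d := by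
  intro K
  induction K using Nat.strong_induction_on with
  | _ K IH =>
    intro d hdK
    by_cases h : ∃ i, a i.succ + 1 ≤ d i
    · rw [normalize_nonred a F h1 hm hdeg h, Nf, totalDegree_neg]
      refine le_trans (totalDegree_finset_sum _ _) (Finset.sup_le fun e he => ?_)
      have hlt : dg e < dg d := keyLt a F h1 hm hdeg h.choose_spec he
      refine le_trans (totalDegree_smul_le _ _) (le_trans ?_ (le_of_lt hlt))
      exact IH (dg e) (lt_of_lt_of_le hlt hdK) e le_rfl
    · rw [normalize_red a F h1 hm hdeg (by push_neg at h; exact fun i => Nat.lt_succ_iff.mp (h i))]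
      exact le_of_eq (totalDegree_monomial _ one_ne_zero)

lemma Nf_deg_le (P : MvPolynomial (Fin n) ℝ) :
    (Nf a F h1 hm hdeg P).totalDegree ≤ P.totalDegree := by
  rw [Nf]
  refine le_trans (totalDegree_finset_sum _ _) (Finset.sup_le fun d hd => ?_)
  refine le_trans (totalDegree_smul_le _ _) (le_trans
    (normalize_deg_le a F h1 hm hdeg (dg d) d le_rfl) (le_totalDegree hd))

lemma normalize_support_red : ∀ K, ∀ d : Fin n →₀ ℕ, dg d ≤ K →
    ∀ e ∈ (normalize a F h1 hm hdeg d).support, ∀ i, e i ≤ a i.succ := by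
  intro K
  induction K using Nat.strong_induction_on with
  | _ K IH =>
    intro d hdK
    by_cases h : ∃ i, a i.succ + 1 ≤ d i
    · rw [normalize_nonred a F h1 hm hdeg h, Nf]
      intro e he i
      rw [support_neg] at he
      have := MvPolynomial.support_sum he
      rw [Finset.mem_biUnion] at this
      obtain ⟨μ, hμ, hμ2⟩ := this
      have hlt : dg μ < dg d := keyLt a F h1 hm hdeg h.choose_spec hμ
      exact IH (dg μ) (lt_of_lt_of_le hlt hdK) μ le_rfl e (Finsupp.support_smul hμ2) i
    · push_neg at h
      rw [normalize_red a F h1 hm hdeg (fun i => Nat.lt_succ_iff.mp (h i))]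
      intro e he i
      have := support_monomial_subset he
      rw [Finset.mem_singleton] at this
      subst this
      exact Nat.lt_succ_iff.mp (h i)

/-- the ideal -/
noncomputable def Ide : Ideal (MvPolynomial (Fin n) ℝ) :=
  Ideal.span (Set.range fun i : Fin n =>
    (X i : MvPolynomial (Fin n) ℝ) ^ (a i.succ + 1) + F i)

lemma smul_mem_Ide {x : MvPolynomial (Fin n) ℝ} (r : ℝ) (hx : x ∈ Ide a F) :
    r • x ∈ Ide a F := by
  rw [MvPolynomial.smul_eq_C_mul]
  exact Ideal.mul_mem_left _ _ hx

lemma normalize_sub_mem : ∀ K, ∀ d : Fin n →₀ ℕ, dg d ≤ K →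
    normalize a F h1 hm hdeg d - monomial d 1 ∈ Ide a F := by
  intro K
  induction K using Nat.strong_induction_on with
  | _ K IH =>
    intro d hdK
    by_cases h : ∃ i, a i.succ + 1 ≤ d i
    · set i := h.choose with hidef
      have hi : a i.succ + 1 ≤ d i := h.choose_spec
      set Q := (monomial (d - Finsupp.single i (a i.succ + 1)) (1:ℝ)) * F i with hQdef
      have step1 : Nf a F h1 hm hdeg Q - Q ∈ Ide a F := by
        have hQ : Q = ∑ e ∈ Q.support, coeff e Q • (monomial e 1 : MvPolynomial (Fin n) ℝ) := by
          conv_lhs => rw [as_sum Q]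
          exact Finset.sum_congr rfl fun e _ => by rw [smul_monomial, smul_eq_mul, mul_one]
        have key : ∑ e ∈ Q.support, coeff e Q •
            (normalize a F h1 hm hdeg e - monomial e 1) = Nf a F h1 hm hdeg Q - Q := by
          simp only [smul_sub]
          rw [Finset.sum_sub_distrib, ← hQ]
          rfl
        rw [← key]
        refine Submodule.sum_mem _ fun e he => ?_
        refine smul_mem_Ide a F _ ?_
        exact IH (dg e) (lt_of_lt_of_le (keyLt a F h1 hm hdeg hi he) hdK) e le_rfl
      have step2 : (monomial d 1 : MvPolynomial (Fin n) ℝ) + Q ∈ Ide a F := by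
        have : (monomial d 1 : MvPolynomial (Fin n) ℝ) + Q
            = monomial (d - Finsupp.single i (a i.succ + 1)) 1
              * ((X i : MvPolynomial (Fin n) ℝ) ^ (a i.succ + 1) + F i) := by
          rw [mul_add, hQdef, X_pow_eq_monomial, monomial_mul, mul_one,
            sub_single_add hi]
        rw [this]
        exact Ideal.mul_mem_left _ _ (Ideal.subset_span ⟨i, rfl⟩)
      have heq : normalize a F h1 hm hdeg d - monomial d 1
          = (-(Nf a F h1 hm hdeg Q - Q)) + (-(monomial d 1 + Q)) := by
        rw [normalize_nonred a F h1 hm hdeg h, ← hidef, ← hQdef]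
        ring
      rw [heq]
      exact Submodule.add_mem _ (Submodule.neg_mem _ step1) (Submodule.neg_mem _ step2)
    · push_neg at h
      rw [normalize_red a F h1 hm hdeg (fun i => Nat.lt_succ_iff.mp (h i)), sub_self]
      exact Submodule.zero_mem _

lemma Nf_sub_mem (P : MvPolynomial (Fin n) ℝ) :
    Nf a F h1 hm hdeg P - P ∈ Ide a F := by
  have hP : P = ∑ d ∈ P.support, coeff d P • (monomial d 1 : MvPolynomial (Fin n) ℝ) := by
    conv_lhs => rw [as_sum P]
    exact Finset.sum_congr rfl fun e _ => by rw [smul_monomial, smul_eq_mul, mul_one]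
  have key : ∑ e ∈ P.support, coeff e P •
      (normalize a F h1 hm hdeg e - monomial e 1) = Nf a F h1 hm hdeg P - P := by
    simp only [smul_sub]
    rw [Finset.sum_sub_distrib, ← hP]
    rfl
  rw [← key]
  refine Submodule.sum_mem _ fun e he => ?_
  exact smul_mem_Ide a F _ (normalize_sub_mem a F h1 hm hdeg (dg e) e le_rfl)

end Stmt16

namespace Stmt16
variable {n : ℕ} (a : Fin (n + 1) → ℕ) (F : Fin n → MvPolynomial (Fin n) ℝ)
variable (h1 : 1 ≤ a 0) (hm : ∀ i : Fin n, a 0 ≤ a i.succ)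
  (hdeg : ∀ i, (F i).totalDegree ≤ a i.succ - a 0)

lemma star : ∀ K, ∀ d : Fin n →₀ ℕ, dg d < K → ∀ j, a j.succ + 1 ≤ d j →
    normalize a F h1 hm hdeg d
      = - Nf a F h1 hm hdeg ((monomial (d - Finsupp.single j (a j.succ + 1)) 1) * F j) := by
  intro K
  induction K using Nat.strong_induction_on with
  | _ K IH =>
    intro d hdK j hj
    have hex : ∃ i, a i.succ + 1 ≤ d i := ⟨j, hj⟩
    have SUB : ∀ (j' : Fin n) (P : MvPolynomial (Fin n) ℝ),
        (∀ μ ∈ P.support, dg μ + (a j'.succ + 1) < dg d) →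
        Nf a F h1 hm hdeg ((monomial (Finsupp.single j' (a j'.succ + 1)) 1) * P)
          = - Nf a F h1 hm hdeg (F j' * P) := by
      intro j' P hP
      rw [Nf_mul_expand]
      have step : ∀ μ ∈ P.support,
          normalize a F h1 hm hdeg (Finsupp.single j' (a j'.succ + 1) + μ)
            = - Nf a F h1 hm hdeg ((monomial μ 1) * F j') := by
        intro μ hμ
        have happl : a j'.succ + 1 ≤ (Finsupp.single j' (a j'.succ + 1) + μ) j' := by
          simp
        have hdg2 : dg (Finsupp.single j' (a j'.succ + 1) + μ) < dg d := by
          rw [dg_add, dg_single]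
          have := hP μ hμ
          omega
        have hst := IH (dg d) hdK (Finsupp.single j' (a j'.succ + 1) + μ) hdg2 j' happl
        rwa [add_tsub_cancel_left] at hst
      rw [Finset.sum_congr rfl (fun μ hμ => by rw [step μ hμ])]
      rw [mul_comm (F j') P, Nf_mul_left_expand]
      rw [← Finset.sum_neg_distrib]
      exact Finset.sum_congr rfl fun μ _ => (smul_neg _ _)
    rw [normalize_nonred a F h1 hm hdeg hex]
    set i0 := hex.choose with hi0def
    have hi0 : a i0.succ + 1 ≤ d i0 := hex.choose_spec
    by_cases hij : i0 = j
    · rw [hij]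
    · set βi := a i0.succ + 1 with hβi
      set βj := a j.succ + 1 with hβj
      set e0 := d - Finsupp.single i0 βi - Finsupp.single j βj with he0
      have hval1 : (d - Finsupp.single i0 βi) j = d j := by
        rw [Finsupp.tsub_apply, Finsupp.single_apply, if_neg hij, Nat.sub_zero]
      have hval2 : (d - Finsupp.single j βj) i0 = d i0 := by
        rw [Finsupp.tsub_apply, Finsupp.single_apply,
          if_neg (fun hc => hij hc.symm), Nat.sub_zero]
      have hle1 : Finsupp.single j βj ≤ d - Finsupp.single i0 βi :=
        Finsupp.single_le_iff.mpr (hval1 ▸ hj)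
      have hle2 : Finsupp.single i0 βi ≤ d - Finsupp.single j βj :=
        Finsupp.single_le_iff.mpr (hval2 ▸ hi0)
      have hdecomp_i : d - Finsupp.single i0 βi = Finsupp.single j βj + e0 := by
        rw [he0, add_comm]
        exact (tsub_add_cancel_of_le hle1).symm
      have hdecomp_j : d - Finsupp.single j βj = Finsupp.single i0 βi + e0 := by
        rw [he0, tsub_right_comm, add_comm]
        exact (tsub_add_cancel_of_le hle2).symm
      have he0sum : dg e0 + βi + βj = dg d := by
        have ha' : dg (d - Finsupp.single j βj) + βj = dg d := dg_sub_single hj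
        have hb' : dg (Finsupp.single i0 βi + e0) = βi + dg e0 := by
          rw [dg_add, dg_single]
        rw [hdecomp_j] at ha'
        omega
      have hbound : ∀ (i' : Fin n), ∀ μ ∈ ((monomial e0 (1:ℝ)) * F i').support,
          dg μ ≤ dg e0 + (a i'.succ - a 0) := by
        intro i' μ hμ
        have h2 : dg μ ≤ ((monomial e0 (1:ℝ)) * F i').totalDegree := le_totalDegree hμ
        have h3 := totalDegree_mul (monomial e0 (1:ℝ)) (F i')
        rw [totalDegree_monomial _ (one_ne_zero)] at h3
        have h5 := hdeg i'
        have : (e0.sum fun _ m => m) = dg e0 := rfl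
        omega
      have hL : Nf a F h1 hm hdeg ((monomial (d - Finsupp.single i0 βi) 1) * F i0)
          = - Nf a F h1 hm hdeg (F j * ((monomial e0 1) * F i0)) := by
        rw [hdecomp_i, ← one_mul (1:ℝ), ← monomial_mul, one_mul, mul_assoc]
        refine SUB j ((monomial e0 1) * F i0) ?_
        intro μ hμ
        have := hbound i0 μ hμ
        have h6 := hm i0
        have h7 := h1
        omega
      have hR : Nf a F h1 hm hdeg ((monomial (d - Finsupp.single j βj) 1) * F j)
          = - Nf a F h1 hm hdeg (F i0 * ((monomial e0 1) * F j)) := by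
        rw [hdecomp_j, ← one_mul (1:ℝ), ← monomial_mul, one_mul, mul_assoc]
        refine SUB i0 ((monomial e0 1) * F j) ?_
        intro μ hμ
        have := hbound j μ hμ
        have h6 := hm j
        have h7 := h1
        omega
      rw [hL, hR]
      rw [show F j * ((monomial e0 1) * F i0) = F i0 * ((monomial e0 1) * F j) by ring]
end Stmt16

namespace Stmt16
variable {n : ℕ} (a : Fin (n + 1) → ℕ) (F : Fin n → MvPolynomial (Fin n) ℝ)
variable (h1 : 1 ≤ a 0) (hm : ∀ i : Fin n, a 0 ≤ a i.succ)
  (hdeg : ∀ i, (F i).totalDegree ≤ a i.succ - a 0)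

lemma Nf_mul_gen (e : Fin n →₀ ℕ) (r : ℝ) (i : Fin n) :
    Nf a F h1 hm hdeg (monomial e r * ((X i : MvPolynomial (Fin n) ℝ) ^ (a i.succ + 1) + F i))
      = 0 := by
  have hsplit : monomial e r * ((X i : MvPolynomial (Fin n) ℝ) ^ (a i.succ + 1) + F i)
      = monomial (e + Finsupp.single i (a i.succ + 1)) r
        + r • ((monomial e 1 : MvPolynomial (Fin n) ℝ) * F i) := by
    rw [mul_add, X_pow_eq_monomial, monomial_mul, mul_one, ← smul_mul_assoc, smul_monomial,
      smul_eq_mul, mul_one]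
  rw [hsplit, Nf_add, Nf_monomial, Nf_smul]
  have happl : a i.succ + 1 ≤ (e + Finsupp.single i (a i.succ + 1)) i := by simp
  have hst := star a F h1 hm hdeg (dg (e + Finsupp.single i (a i.succ + 1)) + 1)
    (e + Finsupp.single i (a i.succ + 1)) (Nat.lt_succ_self _) i happl
  rw [add_tsub_cancel_right] at hst
  rw [hst, smul_neg]
  ring

lemma Nf_mul_gen' (P : MvPolynomial (Fin n) ℝ) (i : Fin n) :
    Nf a F h1 hm hdeg (P * ((X i : MvPolynomial (Fin n) ℝ) ^ (a i.succ + 1) + F i)) = 0 := by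
  rw [mul_expand P _, Nf_finsum]
  refine Finset.sum_eq_zero fun μ _ => ?_
  rw [Nf_smul]
  have := Nf_mul_gen a F h1 hm hdeg μ (1:ℝ) i
  rw [this, smul_zero]

lemma Nf_vanish {x : MvPolynomial (Fin n) ℝ} (hx : x ∈ Ide a F) :
    Nf a F h1 hm hdeg x = 0 := by
  have H : ∀ x ∈ Ide a F, ∀ r : MvPolynomial (Fin n) ℝ, Nf a F h1 hm hdeg (r * x) = 0 := by
    intro y hy
    refine Submodule.span_induction ?_ ?_ ?_ ?_ hy
    · rintro z ⟨i, rfl⟩ r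
      exact Nf_mul_gen' a F h1 hm hdeg r i
    · intro r
      rw [mul_zero, Nf_zero]
    · intro z w _ _ hz hw r
      rw [mul_add, Nf_add, hz, hw, add_zero]
    · intro c z _ hz r
      rw [smul_eq_mul, show r * (c * z) = (r * c) * z by ring]
      exact hz (r * c)
  have := H x hx 1
  rwa [one_mul] at this

end Stmt16

set_option maxHeartbeats 1000000 in
set_option synthInstance.maxHeartbeats 400000 in
open Stmt16 in
theorem stmt_16 (n : ℕ) (hn : 0 < n) (a : Fin (n + 1) → ℕ) (h0 : 2 ≤ a 0)
    (hmono : Monotone a) (F : Fin n → MvPolynomial (Fin n) ℝ)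
    (hdeg : ∀ i : Fin n, (F i).totalDegree ≤ a i.succ - a 0) :
    LinearMap.trace ℝ
        (MvPolynomial (Fin n) ℝ ⧸
          Ideal.span (Set.range fun i : Fin n =>
            (X i : MvPolynomial (Fin n) ℝ) ^ (a i.succ + 1) + F i))
        (LinearMap.mulLeft ℝ
          (Ideal.Quotient.mk
            (Ideal.span (Set.range fun i : Fin n =>
              (X i : MvPolynomial (Fin n) ℝ) ^ (a i.succ + 1) + F i))
            (X (⟨0, hn⟩ : Fin n) ^ 2))) = 0 := by
  classical
  have h1 : 1 ≤ a 0 := le_trans one_le_two h0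
  have hm : ∀ i : Fin n, a 0 ≤ a i.succ := fun i => hmono (Fin.zero_le _)
  show LinearMap.trace ℝ (MvPolynomial (Fin n) ℝ ⧸ Ide a F)
      (LinearMap.mulLeft ℝ (Ideal.Quotient.mk (Ide a F) (X (⟨0, hn⟩ : Fin n) ^ 2))) = 0
  set π := Ideal.Quotient.mkₐ ℝ (Ide a F) with hπ
  have hπx : ∀ x, π x = Ideal.Quotient.mk (Ide a F) x := fun x => rfl
  set toD : ((i : Fin n) → Fin (a i.succ + 1)) → (Fin n →₀ ℕ) :=
    fun v => Finsupp.equivFunOnFinite.symm fun i => (v i : ℕ) with htoDdef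
  have htoD : ∀ (v : (i : Fin n) → Fin (a i.succ + 1)) (i : Fin n), toD v i = v i :=
    fun v i => rfl
  have htoD_inj : Function.Injective toD := by
    intro v w h
    funext i
    have := congrArg (fun d => d i) h
    simp only [htoD] at this
    exact Fin.ext this
  have hred_toD : ∀ (v : (i : Fin n) → Fin (a i.succ + 1)) (i : Fin n), toD v i ≤ a i.succ := by
    intro v i
    rw [htoD]
    exact Nat.lt_succ_iff.mp (v i).2
  have hsurj : ∀ d : Fin n →₀ ℕ, (∀ i, d i ≤ a i.succ) →
      ∃ v : (i : Fin n) → Fin (a i.succ + 1), toD v = d := by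
    intro d hd
    refine ⟨fun i => ⟨d i, Nat.lt_succ_of_le (hd i)⟩, ?_⟩
    ext i
    rw [htoD]
  set bvec : ((i : Fin n) → Fin (a i.succ + 1)) → (MvPolynomial (Fin n) ℝ ⧸ Ide a F) :=
    fun v => π (monomial (toD v) 1) with hbvec
  -- mk respects Nf
  have hπ_norm : ∀ P, π P = π (Nf a F h1 hm hdeg P) := by
    intro P
    rw [hπx, hπx, Ideal.Quotient.eq]
    have := Nf_sub_mem a F h1 hm hdeg P
    simpa using (Submodule.neg_mem _ this)
  -- expansion of π Q over the basis vectors, for reduced Q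
  have hexpand : ∀ Q : MvPolynomial (Fin n) ℝ, (∀ e ∈ Q.support, ∀ i, e i ≤ a i.succ) →
      π Q = ∑ w, coeff (toD w) Q • bvec w := by
    intro Q hQ
    have step1 : π Q = ∑ e ∈ Q.support, coeff e Q • π (monomial e 1) := by
      conv_lhs => rw [as_sum Q]
      rw [map_sum]
      refine Finset.sum_congr rfl fun e _ => ?_
      rw [show (monomial e (coeff e Q) : MvPolynomial (Fin n) ℝ)
        = coeff e Q • monomial e 1 by rw [smul_monomial, smul_eq_mul, mul_one], map_smul]
    rw [step1]
    have step2 : (∑ w, coeff (toD w) Q • bvec w)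
        = ∑ e ∈ Finset.univ.image toD, coeff e Q • π (monomial e 1) := by
      rw [Finset.sum_image (fun x _ y _ h => htoD_inj h)]
    rw [step2]
    refine Finset.sum_subset ?_ ?_
    · intro e he
      obtain ⟨v, rfl⟩ := hsurj e (fun i => hQ e he i)
      exact Finset.mem_image_of_mem toD (Finset.mem_univ v)
    · intro e _ he
      rw [notMem_support_iff.mp he, zero_smul]
  -- linear independence
  have hli : LinearIndependent ℝ bvec := by
    rw [Fintype.linearIndependent_iff]
    intro g hg v
    set P : MvPolynomial (Fin n) ℝ := ∑ w, g w • monomial (toD w) 1 with hP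
    have hπP : π P = 0 := by
      rw [hP, map_sum]
      rw [← hg]
      refine Finset.sum_congr rfl fun w _ => ?_
      rw [map_smul]
    have hPI : P ∈ Ide a F := by
      rwa [hπx, Ideal.Quotient.eq_zero_iff_mem] at hπP
    have hNfP : Nf a F h1 hm hdeg P = P := by
      rw [hP, Nf_finsum]
      refine Finset.sum_congr rfl fun w _ => ?_
      rw [Nf_smul, Nf_monomial, one_smul, normalize_red a F h1 hm hdeg (hred_toD w)]
    have hP0 : P = 0 := by
      rw [← hNfP]
      exact Nf_vanish a F h1 hm hdeg hPI
    have : coeff (toD v) P = g v := by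
      rw [hP, coeff_sum]
      have : ∀ w, coeff (toD v) (g w • (monomial (toD w) 1 : MvPolynomial (Fin n) ℝ))
          = if w = v then g w else 0 := by
        intro w
        rw [coeff_smul, coeff_monomial]
        by_cases h : w = v
        · subst h; rw [if_pos rfl, if_pos rfl, smul_eq_mul, mul_one]
        · rw [if_neg h, if_neg (fun hc => h (htoD_inj hc)), smul_zero]
      rw [Finset.sum_congr rfl fun w _ => this w, Finset.sum_ite_eq' Finset.univ v g,
        if_pos (Finset.mem_univ v)]
    rw [hP0] at this
    simpa using this.symm
  -- spanning
  have hsp : ⊤ ≤ Submodule.span ℝ (Set.range bvec) := by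
    intro x _
    obtain ⟨P, rfl⟩ := Ideal.Quotient.mkₐ_surjective ℝ (I := Ide a F) x
    rw [hπ_norm P]
    have hNf_supp : ∀ e ∈ (Nf a F h1 hm hdeg P).support, ∀ i, e i ≤ a i.succ := by
      intro e he i
      rw [Nf] at he
      have := MvPolynomial.support_sum he
      rw [Finset.mem_biUnion] at this
      obtain ⟨μ, _, hμ2⟩ := this
      exact normalize_support_red a F h1 hm hdeg (dg μ) μ le_rfl e
        (Finsupp.support_smul hμ2) i
    rw [hexpand _ hNf_supp]
    exact Submodule.sum_mem _ fun w _ => Submodule.smul_mem _ _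
      (Submodule.subset_span ⟨w, rfl⟩)
  set B : Module.Basis ((i : Fin n) → Fin (a i.succ + 1)) ℝ (MvPolynomial (Fin n) ℝ ⧸ Ide a F) :=
    Module.Basis.mk hli hsp with hB
  have hBv : ∀ v, B v = bvec v := fun v => Module.Basis.mk_apply hli hsp v
  -- repr formula
  have hrepr : ∀ Q : MvPolynomial (Fin n) ℝ, (∀ e ∈ Q.support, ∀ i, e i ≤ a i.succ) →
      ∀ v, B.repr (π Q) v = coeff (toD v) Q := by
    intro Q hQ v
    rw [hexpand Q hQ, map_sum]
    have : ∀ w, B.repr (coeff (toD w) Q • bvec w) = coeff (toD w) Q • Finsupp.single w 1 := by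
      intro w
      rw [map_smul, ← hBv, B.repr_self]
    rw [Finset.sum_congr rfl fun w _ => this w]
    rw [Finsupp.finset_sum_apply]
    have : ∀ w, (coeff (toD w) Q • Finsupp.single w (1:ℝ)) v
        = if w = v then coeff (toD w) Q else 0 := by
      intro w
      rw [Finsupp.smul_apply, Finsupp.single_apply]
      by_cases h : w = v
      · subst h; rw [if_pos rfl, if_pos rfl, smul_eq_mul, mul_one]
      · rw [if_neg h, if_neg h, smul_zero]
    rw [Finset.sum_congr rfl fun w _ => this w, Finset.sum_ite_eq' Finset.univ v _,
      if_pos (Finset.mem_univ v)]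
  -- the trace
  rw [LinearMap.trace_eq_matrix_trace ℝ B]
  rw [Matrix.trace]
  refine Finset.sum_eq_zero fun v _ => ?_
  rw [Matrix.diag]
  rw [LinearMap.toMatrix_apply]
  set j0 : Fin n := ⟨0, hn⟩ with hj0
  have hfB : (LinearMap.mulLeft ℝ (Ideal.Quotient.mk (Ide a F) ((X j0 : MvPolynomial (Fin n) ℝ) ^ 2))) (B v)
      = π ((X j0 : MvPolynomial (Fin n) ℝ) ^ 2 * monomial (toD v) 1) := by
    simp only [hBv, hbvec, LinearMap.mulLeft_apply, hπx, ← map_mul]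
  rw [hfB]
  set e : Fin n →₀ ℕ := Finsupp.single j0 2 + toD v with he
  have hXe : (X j0 : MvPolynomial (Fin n) ℝ) ^ 2 * monomial (toD v) 1 = monomial e 1 := by
    rw [X_pow_eq_monomial, monomial_mul, one_mul]
  rw [hXe]
  have hπe : π (monomial e 1) = π (normalize a F h1 hm hdeg e) := by
    rw [hπx, hπx, Ideal.Quotient.eq]
    have := normalize_sub_mem a F h1 hm hdeg (dg e) e le_rfl
    simpa using (Submodule.neg_mem _ this)
  rw [hπe]
  rw [hrepr _ (fun e' he' i => normalize_support_red a F h1 hm hdeg (dg e) e le_rfl e' he' i) v]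
  -- coefficient vanishes
  have hej0 : e j0 = 2 + toD v j0 := by
    rw [he, Finsupp.add_apply, Finsupp.single_apply, if_pos rfl]
  have hei : ∀ i, i ≠ j0 → e i = toD v i := by
    intro i hi
    rw [he, Finsupp.add_apply, Finsupp.single_apply, if_neg (fun hc => hi hc.symm), zero_add]
  by_cases hred : ∀ i, e i ≤ a i.succ
  · rw [normalize_red a F h1 hm hdeg hred, coeff_monomial, if_neg]
    intro hc
    have := congrArg (fun d => d j0) hc
    rw [hej0] at this
    omega
  · push_neg at hred
    obtain ⟨i, hi⟩ := hred
    have hij0 : i = j0 := by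
      by_contra hne
      rw [hei i hne] at hi
      exact absurd hi (not_lt.mpr (hred_toD v i))
    rw [hij0] at hi
    have happl : a j0.succ + 1 ≤ e j0 := hi
    have hst := star a F h1 hm hdeg (dg e + 1) e (Nat.lt_succ_self _) j0 happl
    rw [hst, coeff_neg, neg_eq_zero]
    -- degree bound
    have hdg_e : dg e = 2 + dg (toD v) := by rw [he, dg_add, dg_single]
    have hdgsub := dg_sub_single happl
    have hN := Nf_deg_le a F h1 hm hdeg
      ((monomial (e - Finsupp.single j0 (a j0.succ + 1)) 1) * F j0)
    have hlt : (Nf a F h1 hm hdeg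
        ((monomial (e - Finsupp.single j0 (a j0.succ + 1)) 1) * F j0)).totalDegree
        < dg (toD v) := by
      have h3 := totalDegree_mul (monomial (e - Finsupp.single j0 (a j0.succ + 1)) (1:ℝ)) (F j0)
      rw [totalDegree_monomial _ (one_ne_zero)] at h3
      have h5 := hdeg j0
      have h6 := hm j0
      have : ((e - Finsupp.single j0 (a j0.succ + 1)).sum fun _ m => m)
          = dg (e - Finsupp.single j0 (a j0.succ + 1)) := rfl
      omega
    by_contra hne
    have := le_totalDegree (p := Nf a F h1 hm hdeg
      ((monomial (e - Finsupp.single j0 (a j0.succ + 1)) 1) * F j0))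
      (MvPolynomial.mem_support_iff.mpr hne)
    have : dg (toD v) ≤ _ := this
    omega
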